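/- The sequence ρ_{n,i} = F_i · F_{n-i+1} / F_{n+2} (with i fixed) converges as n → ∞ to (α^i − β^i)/(√5 · α^{i+1}), where α = (1+√5)/2 and β = (1−√5)/2. -/

import Mathlib

open Filter Real

local notation "φ" => goldenRatio
local notation "ψ" => goldenConj

lemma aux_fib_div_gold_pow :
    Tendsto (fun n : ℕ => (Nat.fib n : ℝ) / φ ^ n) atTop (nhds (1 / Real.sqrt 5)) := by
  have h5 : Real.sqrt 5 ≠ 0 := by positivity
  have hφ : (0:ℝ) < φ := goldenRatio_pos
  have habs : |ψ / φ| < 1 := by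
    rw [abs_div, abs_of_pos hφ, div_lt_one hφ, abs_lt]
    constructor
    · linarith [neg_one_lt_goldenConj, one_lt_goldenRatio]
    · linarith [goldenConj_neg]
  have h0 : Tendsto (fun n : ℕ => (ψ / φ) ^ n) atTop (nhds 0) :=
    tendsto_pow_atTop_nhds_zero_of_abs_lt_one habs
  have key : Tendsto (fun n : ℕ => (1 - (ψ / φ) ^ n) / Real.sqrt 5) atTop
      (nhds ((1 - 0) / Real.sqrt 5)) := by
    exact ((tendsto_const_nhds.sub h0).div_const _)
  simp only [sub_zero] at key
  refine key.congr (fun n => ?_)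
  rw [Real.coe_fib_eq]
  have hφn : φ ^ n ≠ 0 := pow_ne_zero _ (ne_of_gt hφ)
  rw [div_pow, one_sub_div hφn]
  ring

theorem fib_density_limit (i : ℕ) :
    Filter.Tendsto
      (fun n : ℕ => (Nat.fib i * Nat.fib (n - i + 1) : ℝ) / Nat.fib (n + 2))
      Filter.atTop
      (nhds ((((1 + Real.sqrt 5) / 2) ^ i - ((1 - Real.sqrt 5) / 2) ^ i) /
        (Real.sqrt 5 * ((1 + Real.sqrt 5) / 2) ^ (i + 1)))) := by
  have h5 : Real.sqrt 5 ≠ 0 := by positivity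
  have hφ : (0:ℝ) < φ := goldenRatio_pos
  rw [← Filter.tendsto_add_atTop_iff_nat i]
  have hsimp : ∀ m : ℕ, m + i - i + 1 = m + 1 := fun m => by omega
  -- goal function at m : fib i * fib (m+1) / fib (m+i+2)
  have h1 : Tendsto (fun m : ℕ => (Nat.fib (m + 1) : ℝ) / φ ^ (m + 1)) atTop
      (nhds (1 / Real.sqrt 5)) := by
    have := (aux_fib_div_gold_pow).comp (tendsto_add_atTop_nat 1)
    exact this
  have h2 : Tendsto (fun m : ℕ => (Nat.fib (m + i + 2) : ℝ) / φ ^ (m + i + 2)) atTop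
      (nhds (1 / Real.sqrt 5)) := by
    have := (aux_fib_div_gold_pow).comp (tendsto_add_atTop_nat (i + 2))
    refine this.congr (fun m => ?_)
    simp only [Function.comp]
    ring_nf
  have hg : Tendsto (fun m : ℕ => ((Nat.fib (m + 1) : ℝ) / φ ^ (m + 1)) /
      ((Nat.fib (m + i + 2) : ℝ) / φ ^ (m + i + 2)) * ((Nat.fib i : ℝ) / φ ^ (i + 1)))
      atTop (nhds ((1 / Real.sqrt 5) / (1 / Real.sqrt 5) * ((Nat.fib i : ℝ) / φ ^ (i + 1)))) :=
    (h1.div h2 (by positivity)).mul_const _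
  have hval : (1 / Real.sqrt 5) / (1 / Real.sqrt 5) * ((Nat.fib i : ℝ) / φ ^ (i + 1)) =
      (φ ^ i - ψ ^ i) / (Real.sqrt 5 * φ ^ (i + 1)) := by
    rw [Real.coe_fib_eq]
    field_simp
  rw [hval] at hg
  refine hg.congr (fun m => ?_)
  have hfibpos : (0:ℝ) < Nat.fib (m + i + 2) := by
    exact_mod_cast Nat.fib_pos.mpr (by omega)
  have hφ1 : (φ:ℝ) ^ (m + 1) ≠ 0 := pow_ne_zero _ (ne_of_gt hφ)
  have hφ2 : (φ:ℝ) ^ (m + i + 2) ≠ 0 := pow_ne_zero _ (ne_of_gt hφ)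
  rw [hsimp]
  have : (φ:ℝ) ^ (m + i + 2) = φ ^ (m + 1) * φ ^ (i + 1) := by
    rw [← pow_add]; ring_nf
  rw [div_div_div_comm, this]
  field_simp
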